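/- Discrete-to-integral limit for the dimension weights: let d ≥ 3 be an integer and r > 0. Then lim_{L→∞} ∑_{l=1}^{L−1} ((C_{l+1}^d − C_l^d)/C_L^d) · U((L/l)·r) = (d−2)·∫_1^∞ U(t·r)·t^{1−d} dt, where the limit is taken over natural numbers L ≥ 2. -/

import Mathlib

open MeasureTheory Filter

open Set

/-- The limiting profile `U`. -/
noncomputable def U (r : ℝ) : ℝ :=
  if r ≤ 1 then 1 / 2 else 1 / 2 - Real.arccos (1 / r) / Real.pi

/-- Dimension of the space of degree-`l` spherical harmonics in `ℝ^d`. -/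
def Cdim (d l : ℕ) : ℕ :=
  Nat.choose (l + d - 2) (d - 2) + Nat.choose (l + d - 3) (d - 2)

lemma U_nonneg (x : ℝ) : 0 ≤ U x := by
  unfold U
  split_ifs with h
  · norm_num
  · have h1 : (0:ℝ) < x := by linarith
    have h2 : Real.arccos (1 / x) ≤ Real.pi / 2 := by
      rw [Real.arccos_le_pi_div_two]
      positivity
    have hpi := Real.pi_pos
    rw [sub_nonneg, div_le_iff₀ hpi]
    linarith

lemma U_le_half (x : ℝ) : U x ≤ 1 / 2 := by
  unfold U
  split_ifs with h
  · exact le_refl _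
  · have h2 := Real.arccos_nonneg (1 / x)
    have hpi := Real.pi_pos
    have : 0 ≤ Real.arccos (1/x) / Real.pi := by positivity
    linarith

lemma U_continuousAt {x : ℝ} (hx : 0 < x) : ContinuousAt U x := by
  have hV : ContinuousAt (fun y : ℝ => 1 / 2 - Real.arccos (min 1 y⁻¹) / Real.pi) x := by
    have : ContinuousAt (fun y : ℝ => y⁻¹) x := continuousAt_inv₀ hx.ne'
    have hpi := Real.pi_ne_zero
    exact (continuousAt_const.sub (((Real.continuous_arccos.continuousAt).comp
      (continuousAt_const.min this)).div continuousAt_const hpi))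
  apply hV.congr
  have hmem : Set.Ioi (0:ℝ) ∈ nhds x := Ioi_mem_nhds hx
  filter_upwards [hmem] with y hy
  simp only [Set.mem_Ioi] at hy
  unfold U
  split_ifs with h
  · have : (1:ℝ) ≤ y⁻¹ := one_le_inv_iff₀.mpr ⟨hy, h⟩
    rw [min_eq_left this, Real.arccos_one]
    norm_num
  · push_neg at h
    have : y⁻¹ ≤ 1 := by rw [inv_le_one_iff₀]; right; linarith
    rw [min_eq_right this, one_div]
    norm_num


lemma cdim_eq (f l : ℕ) :
    Cdim (f + 3) l = Nat.choose (l + f + 1) (f + 1) + Nat.choose (l + f) (f + 1) := by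
  unfold Cdim
  congr 2 <;> omega

lemma cdim_succ (f l : ℕ) :
    Cdim (f + 3) (l + 1)
      = Cdim (f + 3) l + (Nat.choose (l + f + 1) f + Nat.choose (l + f) f) := by
  rw [cdim_eq, cdim_eq]
  have h1 : l + 1 + f + 1 = (l + f + 1) + 1 := by omega
  have h2 : l + 1 + f = (l + f) + 1 := by omega
  rw [h1, h2, Nat.choose_succ_succ (l + f + 1) f, Nat.choose_succ_succ (l + f) f]
  ring

lemma cdim_bound (f l L : ℕ) (hl : l + 1 ≤ L) :
    L * (Nat.choose (l + f + 1) f + Nat.choose (l + f) f)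
      ≤ 2 * (f + 1) * Cdim (f + 3) L := by
  have h1 : Nat.choose (l + f + 1) f ≤ Nat.choose (L + f) f :=
    Nat.choose_le_choose _ (by omega)
  have h2 : Nat.choose (l + f) f ≤ Nat.choose (L + f) f :=
    Nat.choose_le_choose _ (by omega)
  have key : (L + f + 1) * Nat.choose (L + f) f = Nat.choose (L + f + 1) (f + 1) * (f + 1) :=
    Nat.add_one_mul_choose_eq (L + f) f
  have h3 : L * Nat.choose (L + f) f ≤ (f + 1) * Nat.choose (L + f + 1) (f + 1) := by
    calc L * Nat.choose (L + f) f ≤ (L + f + 1) * Nat.choose (L + f) f :=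
          Nat.mul_le_mul_right _ (by omega)
    _ = (f + 1) * Nat.choose (L + f + 1) (f + 1) := by rw [key]; ring
  have h4 : Nat.choose (L + f + 1) (f + 1) ≤ Cdim (f + 3) L := by
    rw [cdim_eq]; omega
  calc L * (Nat.choose (l + f + 1) f + Nat.choose (l + f) f)
      ≤ L * (2 * Nat.choose (L + f) f) := Nat.mul_le_mul_left _ (by omega)
    _ = 2 * (L * Nat.choose (L + f) f) := by ring
    _ ≤ 2 * ((f + 1) * Nat.choose (L + f + 1) (f + 1)) := Nat.mul_le_mul_left _ h3
    _ ≤ 2 * (f + 1) * Cdim (f + 3) L := by rw [mul_assoc]; exact Nat.mul_le_mul_left _ (Nat.mul_le_mul_left _ h4)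

lemma cdim_pos (f L : ℕ) : 0 < Cdim (f + 3) L := by
  rw [cdim_eq]
  have : 0 < Nat.choose (L + f + 1) (f + 1) := Nat.choose_pos (by omega)
  omega


lemma desc_div_tendsto (k : ℕ) {u : ℕ → ℕ} {s : ℝ} (hs : 0 < s)
    (hu : Tendsto (fun L : ℕ => (u L : ℝ) / L) atTop (nhds s)) :
    Tendsto (fun L : ℕ => ((u L).descFactorial k : ℝ) / (L : ℝ) ^ k) atTop (nhds (s ^ k)) := by
  have h1 : Tendsto (fun L : ℕ => ∏ i ∈ Finset.range k, (((u L : ℝ) - i) / L)) atTop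
      (nhds (∏ _i ∈ Finset.range k, s)) := by
    apply tendsto_finset_prod
    intro i _
    have heq : (fun L : ℕ => ((u L : ℝ) - i) / L) = fun L : ℕ => (u L : ℝ) / L - i / L := by
      funext L; rw [sub_div]
    rw [heq]
    have h0 : Tendsto (fun L : ℕ => (i : ℝ) / L) atTop (nhds 0) :=
      tendsto_const_div_atTop_nhds_zero_nat _
    simpa using hu.sub h0
  rw [Finset.prod_const, Finset.card_range] at h1
  apply h1.congr'
  have hbig : ∀ᶠ L : ℕ in atTop, k ≤ u L := by
    have hh : ∀ᶠ x in nhds s, s / 2 < x := eventually_gt_nhds (half_lt_self hs)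
    have S1 : ∀ᶠ L : ℕ in atTop, s / 2 < (u L : ℝ) / L := hu.eventually hh
    have S2 : ∀ᶠ L : ℕ in atTop, (2 * k / s : ℝ) ≤ (L : ℝ) :=
      tendsto_natCast_atTop_atTop.eventually_ge_atTop _
    filter_upwards [S1, S2, eventually_ge_atTop 1] with L hL1 hL2 hL3
    have hLpos : (0 : ℝ) < L := by exact_mod_cast hL3
    have : (k : ℝ) ≤ u L := by
      have h4 : s / 2 * (2 * k / s) ≤ s / 2 * L := by
        apply mul_le_mul_of_nonneg_left hL2 (by positivity)
      have h5 : s / 2 * (2 * k / s) = k := by field_simp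
      have h6 : s / 2 * L < u L := by
        rw [lt_div_iff₀ hLpos] at hL1
        linarith [hL1]
      linarith
    exact_mod_cast this
  filter_upwards [hbig, eventually_ge_atTop 1] with L hk hL1
  rw [Nat.descFactorial_eq_prod_range]
  push_cast
  rw [Finset.prod_div_distrib, Finset.prod_const, Finset.card_range]
  congr 1
  apply Finset.prod_congr rfl
  intro i hi
  rw [Nat.cast_sub (le_trans (Finset.mem_range.mp hi).le hk)]


lemma shift_tendsto {m : ℕ → ℕ} {s : ℝ} (c : ℕ)
    (hm : Tendsto (fun L : ℕ => (m L : ℝ) / L) atTop (nhds s)) :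
    Tendsto (fun L : ℕ => ((m L + c : ℕ) : ℝ) / L) atTop (nhds s) := by
  have h0 : Tendsto (fun L : ℕ => (c : ℝ) / L) atTop (nhds 0) :=
    tendsto_const_div_atTop_nhds_zero_nat _
  have := hm.add h0
  rw [add_zero] at this
  apply this.congr
  intro L
  push_cast
  rw [add_div]

lemma div_helper1 (a b c F : ℝ) (hF : F ≠ 0) : (F * a / c + F * b / c) / F = (a + b) / c := by
  rw [mul_div_assoc, mul_div_assoc, ← mul_add, mul_comm, mul_div_assoc, div_self hF, mul_one,
    ← add_div]

lemma div_helper2 (f : ℕ) (a c x : ℝ) (hx : x ≠ 0) :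
    (a / x ^ f) / (c / x ^ (f + 1)) = x * a / c := by
  rw [div_div_div_eq, pow_succ]
  rw [show a * (x ^ f * x) = (x * a) * x ^ f by ring, show x ^ f * c = c * x ^ f by ring]
  exact mul_div_mul_right _ _ (pow_ne_zero _ hx)

lemma A_tendsto (f : ℕ) {m : ℕ → ℕ} {s : ℝ} (hs : 0 < s)
    (hm : Tendsto (fun L : ℕ => (m L : ℝ) / L) atTop (nhds s)) :
    Tendsto (fun L : ℕ =>
        (L : ℝ) * ((Nat.choose (m L + f + 1) f + Nat.choose (m L + f) f : ℕ) : ℝ)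
          / ((Nat.choose (L + f + 1) (f + 1) + Nat.choose (L + f) (f + 1) : ℕ) : ℝ))
      atTop (nhds (((f : ℝ) + 1) * s ^ f)) := by
  have hfac : ((Nat.factorial f : ℕ) : ℝ) ≠ 0 := by positivity
  have hfac1 : ((Nat.factorial (f+1) : ℕ) : ℝ) ≠ 0 := by positivity
  have hone : Tendsto (fun L : ℕ => ((L : ℕ) : ℝ) / L) atTop (nhds 1) := by
    apply Tendsto.congr' _ tendsto_const_nhds
    filter_upwards [eventually_ge_atTop 1] with L hL
    have : (L : ℝ) ≠ 0 := by positivity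
    field_simp
  have hnum : Tendsto (fun L : ℕ =>
      ((Nat.choose (m L + f + 1) f + Nat.choose (m L + f) f : ℕ) : ℝ) / (L : ℝ) ^ f)
      atTop (nhds ((s ^ f + s ^ f) / (Nat.factorial f : ℝ))) := by
    have ha := desc_div_tendsto f hs (shift_tendsto (f + 1) hm)
    have hb := desc_div_tendsto f hs (shift_tendsto f hm)
    have := (ha.add hb).div_const ((Nat.factorial f : ℕ) : ℝ)
    apply this.congr
    intro L
    have e1 : (((m L + (f + 1)).descFactorial f : ℕ) : ℝ) = (Nat.factorial f : ℝ) * Nat.choose (m L + f + 1) f := by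
      rw [show m L + (f + 1) = m L + f + 1 by ring]
      exact_mod_cast Nat.descFactorial_eq_factorial_mul_choose _ f
    have e2 : (((m L + f).descFactorial f : ℕ) : ℝ) = (Nat.factorial f : ℝ) * Nat.choose (m L + f) f := by
      exact_mod_cast Nat.descFactorial_eq_factorial_mul_choose _ f
    rw [e1, e2, div_helper1 _ _ _ _ hfac, Nat.cast_add]
  have hden : Tendsto (fun L : ℕ =>
      ((Nat.choose (L + f + 1) (f + 1) + Nat.choose (L + f) (f + 1) : ℕ) : ℝ) / (L : ℝ) ^ (f + 1))
      atTop (nhds ((1 ^ (f + 1) + 1 ^ (f + 1)) / (Nat.factorial (f+1) : ℝ))) := by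
    have ha := desc_div_tendsto (f + 1) one_pos (shift_tendsto (f + 1) hone)
    have hb := desc_div_tendsto (f + 1) one_pos (shift_tendsto f hone)
    have := (ha.add hb).div_const ((Nat.factorial (f+1) : ℕ) : ℝ)
    apply this.congr
    intro L
    have e1 : (((L + (f + 1)).descFactorial (f + 1) : ℕ) : ℝ)
        = (Nat.factorial (f+1) : ℝ) * Nat.choose (L + f + 1) (f + 1) := by
      rw [show L + (f + 1) = L + f + 1 by ring]
      exact_mod_cast Nat.descFactorial_eq_factorial_mul_choose _ (f + 1)
    have e2 : (((L + f).descFactorial (f + 1) : ℕ) : ℝ)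
        = (Nat.factorial (f+1) : ℝ) * Nat.choose (L + f) (f + 1) := by
      exact_mod_cast Nat.descFactorial_eq_factorial_mul_choose _ (f + 1)
    rw [e1, e2, div_helper1 _ _ _ _ hfac1, Nat.cast_add]
  have hden_ne : ((1 : ℝ) ^ (f + 1) + 1 ^ (f + 1)) / (Nat.factorial (f+1) : ℝ) ≠ 0 := by
    simp only [one_pow]
    positivity
  have hq := hnum.div hden hden_ne
  have hval : (s ^ f + s ^ f) / (Nat.factorial f : ℝ) / (((1 : ℝ) ^ (f + 1) + 1 ^ (f + 1)) / (Nat.factorial (f+1) : ℝ))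
      = ((f : ℝ) + 1) * s ^ f := by
    have : ((Nat.factorial (f+1) : ℕ) : ℝ) = ((f : ℝ) + 1) * (Nat.factorial f : ℝ) := by
      rw [Nat.factorial_succ]; push_cast; ring
    rw [this]
    simp only [one_pow]
    field_simp
  rw [hval] at hq
  apply hq.congr'
  filter_upwards [eventually_ge_atTop 1] with L hL
  have hL0 : (L : ℝ) ≠ 0 := by positivity
  simp only [Pi.div_apply]
  rw [div_helper2 f _ _ _ hL0]


/-- coefficient of the step function -/
noncomputable def cco (r : ℝ) (f L l : ℕ) : ℝ :=
  (L : ℝ) * ((Nat.choose (l + f + 1) f + Nat.choose (l + f) f : ℕ) : ℝ)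
    / ((Cdim (f + 3) L : ℕ) : ℝ) * U (((L : ℝ) / (l : ℝ)) * r)

noncomputable def gstep (r : ℝ) (f L : ℕ) : ℝ → ℝ := fun s =>
  ∑ l ∈ Finset.Icc 1 (L - 1),
    Set.indicator (Set.Ioc (((l : ℝ) - 1) / L) ((l : ℝ) / L)) (fun _ => cco r f L l) s

lemma cco_nonneg (r : ℝ) (f L l : ℕ) : 0 ≤ cco r f L l := by
  unfold cco
  have h1 := cdim_pos f L
  have h2 := U_nonneg (((L : ℝ) / (l : ℝ)) * r)
  have : (0:ℝ) < ((Cdim (f + 3) L : ℕ) : ℝ) := by exact_mod_cast h1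
  positivity

lemma cco_le (r : ℝ) (f L l : ℕ) (hl : l + 1 ≤ L) : cco r f L l ≤ (f : ℝ) + 1 := by
  unfold cco
  have h1 := cdim_pos f L
  have hC : (0:ℝ) < ((Cdim (f + 3) L : ℕ) : ℝ) := by exact_mod_cast h1
  have h2 := U_le_half (((L : ℝ) / (l : ℝ)) * r)
  have h3 := U_nonneg (((L : ℝ) / (l : ℝ)) * r)
  have hb : (L : ℝ) * ((Nat.choose (l + f + 1) f + Nat.choose (l + f) f : ℕ) : ℝ)
      / ((Cdim (f + 3) L : ℕ) : ℝ) ≤ 2 * ((f : ℝ) + 1) := by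
    rw [div_le_iff₀ hC]
    have := cdim_bound f l L hl
    calc (L : ℝ) * ((Nat.choose (l + f + 1) f + Nat.choose (l + f) f : ℕ) : ℝ)
        = ((L * (Nat.choose (l + f + 1) f + Nat.choose (l + f) f) : ℕ) : ℝ) := by push_cast; ring
      _ ≤ ((2 * (f + 1) * Cdim (f + 3) L : ℕ) : ℝ) := by exact_mod_cast this
      _ = 2 * ((f : ℝ) + 1) * ((Cdim (f + 3) L : ℕ) : ℝ) := by push_cast; ring
  have hA : (0:ℝ) ≤ (L : ℝ) * ((Nat.choose (l + f + 1) f + Nat.choose (l + f) f : ℕ) : ℝ)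
      / ((Cdim (f + 3) L : ℕ) : ℝ) := by positivity
  calc (L : ℝ) * _ / _ * U (((L : ℝ) / (l : ℝ)) * r) ≤ (2 * ((f : ℝ) + 1)) * (1 / 2) :=
        mul_le_mul hb h2 h3 (by positivity)
    _ = (f : ℝ) + 1 := by ring

lemma mem_unique (L l l' : ℕ) (s : ℝ) (hl : l ∈ Finset.Icc 1 (L - 1))
    (hl' : l' ∈ Finset.Icc 1 (L - 1))
    (hs : s ∈ Set.Ioc (((l : ℝ) - 1) / L) ((l : ℝ) / L))
    (hs' : s ∈ Set.Ioc (((l' : ℝ) - 1) / L) ((l' : ℝ) / L)) : l = l' := by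
  simp only [Finset.mem_Icc] at hl hl'
  have hL : 2 ≤ L := by omega
  have hLpos : (0:ℝ) < L := by exact_mod_cast (by omega : 0 < L)
  obtain ⟨h1, h2⟩ := hs
  obtain ⟨h1', h2'⟩ := hs'
  rw [div_lt_iff₀ hLpos] at h1 h1'
  rw [le_div_iff₀ hLpos] at h2 h2'
  have e1 : ((l:ℝ) - 1) < (l':ℝ) := by nlinarith
  have e2 : ((l':ℝ) - 1) < (l:ℝ) := by nlinarith
  have : (l:ℝ) < (l':ℝ) + 1 := by linarith
  have h5 : l < l' + 1 := by exact_mod_cast this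
  have : (l':ℝ) < (l:ℝ) + 1 := by linarith
  have h6 : l' < l + 1 := by exact_mod_cast this
  omega

lemma gstep_eval (r : ℝ) (f L l : ℕ) (hl : l ∈ Finset.Icc 1 (L - 1))
    {s : ℝ} (hs : s ∈ Set.Ioc (((l : ℝ) - 1) / L) ((l : ℝ) / L)) :
    gstep r f L s = cco r f L l := by
  unfold gstep
  rw [Finset.sum_eq_single_of_mem l hl]
  · rw [Set.indicator_of_mem hs]
  · intro l' hl' hne
    rw [Set.indicator_of_notMem]
    intro hs'
    exact hne (mem_unique L l' l s hl' hl hs' hs)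

lemma gstep_bound (r : ℝ) (f L : ℕ) (s : ℝ) : ‖gstep r f L s‖ ≤ (f : ℝ) + 1 := by
  by_cases hex : ∃ l ∈ Finset.Icc 1 (L - 1), s ∈ Set.Ioc (((l : ℝ) - 1) / L) ((l : ℝ) / L)
  · obtain ⟨l, hl, hs⟩ := hex
    rw [gstep_eval r f L l hl hs, Real.norm_eq_abs, abs_of_nonneg (cco_nonneg r f L l)]
    have hmem := Finset.mem_Icc.mp hl
    exact cco_le r f L l (by omega)
  · push_neg at hex
    have : gstep r f L s = 0 := by
      apply Finset.sum_eq_zero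
      intro l hl
      exact Set.indicator_of_notMem (hex l hl) _
    rw [this]
    simp
    positivity

lemma gstep_meas (r : ℝ) (f L : ℕ) : Measurable (gstep r f L) := by
  apply Finset.measurable_sum
  intro l _
  exact measurable_const.indicator measurableSet_Ioc

lemma gstep_integral (r : ℝ) (f L : ℕ) (hL : 2 ≤ L) :
    ∫ s in Set.Ioo (0:ℝ) 1, gstep r f L s
      = ∑ l ∈ Finset.Icc 1 (L - 1),
          (((Cdim (f + 3) (l + 1) : ℝ) - (Cdim (f + 3) l : ℝ)) / (Cdim (f + 3) L : ℝ)) *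
            U (((L : ℝ) / (l : ℝ)) * r) := by
  have hLpos : (0:ℝ) < L := by exact_mod_cast (by omega : 0 < L)
  unfold gstep
  rw [integral_finset_sum]
  · apply Finset.sum_congr rfl
    intro l hl
    have hmem := Finset.mem_Icc.mp hl
    have hsub : Set.Ioc (((l : ℝ) - 1) / L) ((l : ℝ) / L) ⊆ Set.Ioo (0:ℝ) 1 := by
      intro x hx
      obtain ⟨hx1, hx2⟩ := hx
      constructor
      · have : (0:ℝ) ≤ ((l:ℝ) - 1) / L := by
          apply div_nonneg _ hLpos.le
          have : (1:ℝ) ≤ (l:ℝ) := by exact_mod_cast hmem.1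
          linarith
        linarith
      · have hlL : (l:ℝ) ≤ (L:ℝ) - 1 := by
          have : (l:ℝ) ≤ ((L - 1 : ℕ) : ℝ) := by exact_mod_cast hmem.2
          rw [Nat.cast_sub (by omega)] at this
          simpa using this
        have : (l:ℝ) / L ≤ ((L:ℝ) - 1) / L := by gcongr
        have h9 : ((L:ℝ) - 1) / L < 1 := by
          rw [div_lt_one hLpos]; linarith
        linarith
    rw [integral_indicator_const _ measurableSet_Ioc]
    rw [measureReal_def, Measure.restrict_apply measurableSet_Ioc, Set.inter_eq_left.mpr hsub,
      Real.volume_Ioc]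
    have hd : (l:ℝ) / L - ((l:ℝ) - 1) / L = 1 / L := by field_simp; ring
    rw [hd, ENNReal.toReal_ofReal (by positivity), smul_eq_mul]
    unfold cco
    have hD : ((Cdim (f + 3) (l + 1) : ℝ) - (Cdim (f + 3) l : ℝ))
        = ((Nat.choose (l + f + 1) f + Nat.choose (l + f) f : ℕ) : ℝ) := by
      rw [cdim_succ]; push_cast; ring
    rw [hD]
    have hL0 : (L:ℝ) ≠ 0 := hLpos.ne'
    have hre : (L : ℝ) * ((Nat.choose (l + f + 1) f + Nat.choose (l + f) f : ℕ) : ℝ)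
        / ((Cdim (f + 3) L : ℕ) : ℝ) * U (((L : ℝ) / (l : ℝ)) * r)
        = (L:ℝ) * (((Nat.choose (l + f + 1) f + Nat.choose (l + f) f : ℕ) : ℝ)
            / ((Cdim (f + 3) L : ℕ) : ℝ) * U (((L : ℝ) / (l : ℝ)) * r)) := by ring
    rw [hre, one_div, inv_mul_cancel_left₀ hL0]
  · intro l _
    rw [integrable_indicator_iff measurableSet_Ioc]
    apply (integrableOn_const_iff (C := cco r f L l)).mpr
    right
    calc (volume.restrict (Set.Ioo (0:ℝ) 1)) (Set.Ioc (((l : ℝ) - 1) / L) ((l : ℝ) / L))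
        ≤ volume (Set.Ioc (((l : ℝ) - 1) / L) ((l : ℝ) / L)) := Measure.restrict_le_self _
      _ < ⊤ := by rw [Real.volume_Ioc]; exact ENNReal.ofReal_lt_top


lemma gstep_tendsto (r : ℝ) (hr : 0 < r) (f : ℕ) {s : ℝ} (hs : s ∈ Set.Ioo (0:ℝ) 1) :
    Tendsto (fun L : ℕ => gstep r f L s) atTop
      (nhds (((f : ℝ) + 1) * s ^ f * U (r / s))) := by
  obtain ⟨hs0, hs1⟩ := hs
  set m : ℕ → ℕ := fun L => ⌈(L : ℝ) * s⌉₊ with hm_def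
  have hm : Tendsto (fun L : ℕ => (m L : ℝ) / L) atTop (nhds s) := by
    have hup : Tendsto (fun L : ℕ => s + 1 / (L : ℝ)) atTop (nhds s) := by
      have h1 : Tendsto (fun _ : ℕ => s) atTop (nhds s) := tendsto_const_nhds
      have h2 : Tendsto (fun L : ℕ => 1 / (L : ℝ)) atTop (nhds 0) :=
        tendsto_one_div_atTop_nhds_zero_nat
      simpa using h1.add h2
    apply tendsto_of_tendsto_of_tendsto_of_le_of_le' tendsto_const_nhds hup
    · filter_upwards [eventually_ge_atTop 1] with L hL
      have hLpos : (0:ℝ) < L := by exact_mod_cast hL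
      rw [le_div_iff₀ hLpos]
      calc s * L = (L:ℝ) * s := by ring
        _ ≤ m L := Nat.le_ceil _
    · filter_upwards [eventually_ge_atTop 1] with L hL
      have hLpos : (0:ℝ) < L := by exact_mod_cast hL
      rw [div_le_iff₀ hLpos]
      have h3 : (m L : ℝ) < (L:ℝ) * s + 1 := Nat.ceil_lt_add_one (by positivity)
      calc (m L : ℝ) ≤ (L:ℝ) * s + 1 := h3.le
        _ = (s + 1 / L) * L := by field_simp
  have hA := A_tendsto f hs0 hm
  have hU : Tendsto (fun L : ℕ => U (r / ((m L : ℝ) / L))) atTop (nhds (U (r / s))) := by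
    have hc1 : ContinuousAt (fun x : ℝ => r / x) s :=
      continuousAt_const.div continuousAt_id hs0.ne'
    have hc2 : ContinuousAt U (r / s) := U_continuousAt (by positivity)
    exact (hc2.comp hc1).tendsto.comp hm
  have hmul := hA.mul hU
  apply hmul.congr'
  have hEv : ∀ᶠ L : ℕ in atTop, (1 / (1 - s) : ℝ) ≤ L :=
    tendsto_natCast_atTop_atTop.eventually_ge_atTop _
  filter_upwards [hEv, eventually_ge_atTop 1] with L hL2 hL1
  have hLpos : (0:ℝ) < L := by exact_mod_cast hL1
  have h1s : (0:ℝ) < 1 - s := by linarith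
  have hLs : (L:ℝ) * s ≤ (L:ℝ) - 1 := by
    have : (1:ℝ) ≤ (1 - s) * L := by
      have h4 : (1 - s) * (1 / (1 - s)) ≤ (1 - s) * L := mul_le_mul_of_nonneg_left hL2 h1s.le
      have h5 : (1 - s) * (1 / (1 - s)) = 1 := by field_simp
      linarith
    nlinarith
  have hm1 : 1 ≤ m L := by
    rw [hm_def]
    exact Nat.one_le_iff_ne_zero.mpr (by
      intro h
      have := Nat.ceil_eq_zero.mp h
      nlinarith)
  have hmL : m L ≤ L - 1 := by
    rw [hm_def]
    apply Nat.ceil_le.mpr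
    rw [Nat.cast_sub hL1]
    simpa using hLs
  have hmem : m L ∈ Finset.Icc 1 (L - 1) := Finset.mem_Icc.mpr ⟨hm1, hmL⟩
  have hsin : s ∈ Set.Ioc (((m L : ℝ) - 1) / L) ((m L : ℝ) / L) := by
    constructor
    · rw [div_lt_iff₀ hLpos]
      have h3 : (m L : ℝ) < (L:ℝ) * s + 1 := Nat.ceil_lt_add_one (by positivity)
      nlinarith
    · rw [le_div_iff₀ hLpos]
      calc s * L = (L:ℝ) * s := by ring
        _ ≤ m L := Nat.le_ceil _
  rw [gstep_eval r f L (m L) hmem hsin]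
  unfold cco
  rw [cdim_eq]
  have hmpos : (0:ℝ) < (m L : ℝ) := by exact_mod_cast hm1
  congr 1
  congr 1
  rw [div_div_eq_mul_div, div_mul_eq_mul_div, mul_comm r (L:ℝ)]


lemma integral_tendsto (r : ℝ) (hr : 0 < r) (f : ℕ) :
    Tendsto (fun L : ℕ => ∫ s in Set.Ioo (0:ℝ) 1, gstep r f L s) atTop
      (nhds (∫ s in Set.Ioo (0:ℝ) 1, ((f : ℝ) + 1) * s ^ f * U (r / s))) := by
  apply tendsto_integral_of_dominated_convergence (fun _ => (f : ℝ) + 1)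
  · exact fun L => (gstep_meas r f L).aestronglyMeasurable
  · apply (integrableOn_const_iff (C := (f : ℝ) + 1)).mpr
    right
    rw [Real.volume_Ioo]
    exact ENNReal.ofReal_lt_top
  · exact fun L => Eventually.of_forall (gstep_bound r f L)
  · exact (ae_restrict_mem measurableSet_Ioo).mono fun s hs => gstep_tendsto r hr f hs

lemma cov (r : ℝ) (hr : 0 < r) (f : ℕ) :
    ∫ s in Set.Ioo (0:ℝ) 1, ((f : ℝ) + 1) * s ^ f * U (r / s)
      = (((f + 3 : ℕ) : ℝ) - 2) *
          ∫ t in Set.Ioi (1:ℝ), U (t * r) * t ^ ((1:ℝ) - ((f + 3 : ℕ) : ℝ)) := by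
  have himg : (fun x : ℝ => x⁻¹) '' Set.Ioi 1 = Set.Ioo 0 1 := by
    ext x
    simp only [Set.mem_image, Set.mem_Ioi, Set.mem_Ioo]
    constructor
    · rintro ⟨y, hy, rfl⟩
      have hy0 : (0:ℝ) < y := lt_trans one_pos hy
      exact ⟨inv_pos.mpr hy0, inv_lt_one_of_one_lt₀ hy⟩
    · rintro ⟨h0, h1⟩
      exact ⟨x⁻¹, (one_lt_inv₀ h0).mpr h1, inv_inv x⟩
  have hderiv : ∀ x ∈ Set.Ioi (1:ℝ),
      HasDerivWithinAt (fun y : ℝ => y⁻¹) (-(x ^ 2)⁻¹) (Set.Ioi 1) x := fun x hx =>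
    (hasDerivAt_inv (ne_of_gt (lt_trans one_pos hx))).hasDerivWithinAt
  have hinj : Set.InjOn (fun y : ℝ => y⁻¹) (Set.Ioi 1) := fun a _ b _ h => inv_injective h
  have hcov := integral_image_eq_integral_abs_deriv_smul measurableSet_Ioi hderiv hinj
    (fun s => ((f : ℝ) + 1) * s ^ f * U (r / s))
  rw [himg] at hcov
  rw [hcov]
  have hconst : (((f + 3 : ℕ) : ℝ) - 2) = (f : ℝ) + 1 := by push_cast; ring
  rw [hconst, ← integral_const_mul]
  apply setIntegral_congr_fun measurableSet_Ioi
  intro x hx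
  simp only [Set.mem_Ioi] at hx
  have hx0 : (0:ℝ) < x := lt_trans one_pos hx
  have habs : |(-(x ^ 2)⁻¹)| = (x ^ 2)⁻¹ := by
    rw [abs_neg, abs_of_nonneg (by positivity)]
  have harg : r / x⁻¹ = x * r := by
    rw [div_eq_mul_inv, inv_inv, mul_comm]
  have hpow : x ^ ((1:ℝ) - ((f + 3 : ℕ) : ℝ)) = (x ^ (f + 2 : ℕ))⁻¹ := by
    have h1 : (1:ℝ) - ((f + 3 : ℕ) : ℝ) = -(((f + 2 : ℕ) : ℝ)) := by push_cast; ring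
    rw [h1, Real.rpow_neg hx0.le, Real.rpow_natCast]
  simp only [smul_eq_mul]
  rw [habs, harg, hpow]
  rw [inv_pow, pow_add x f 2, mul_inv]
  ring


theorem tendsto_discrete_weights_to_integral (d : ℕ) (hd : 3 ≤ d) (r : ℝ) (hr : 0 < r) :
    Tendsto (fun L : ℕ =>
        ∑ l ∈ Finset.Icc 1 (L - 1),
          (((Cdim d (l + 1) : ℝ) - (Cdim d l : ℝ)) / (Cdim d L : ℝ)) *
            U (((L : ℝ) / (l : ℝ)) * r))
      atTop
      (nhds (((d : ℝ) - 2) * ∫ t in Set.Ioi (1:ℝ), U (t * r) * t ^ ((1:ℝ) - d))) := by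
  obtain ⟨f, rfl⟩ : ∃ f, d = f + 3 := ⟨d - 3, by omega⟩
  have hfin := integral_tendsto r hr f
  rw [cov r hr f] at hfin
  apply hfin.congr'
  filter_upwards [eventually_ge_atTop 2] with L hL
  exact gstep_integral r f L hL
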